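/- Let F be a field of characteristic zero, N ≥ 1, and let k, n be natural numbers with 1 ≤ k < n. Then the map ∂_0^{n−k} induces an F-linear isomorphism S^n / (S^n ∩ 𝔪^{k+1}) ≅ S^k between the quotient of the degree-n homogeneous polynomials by the degree-n homogeneous part of the ideal power 𝔪^{k+1} (where 𝔪 = (X_1, …, X_N)) and the space of degree-k homogeneous polynomials. -/

import Mathlib

set_option linter.unusedSectionVars false
set_option maxHeartbeats 1000000

open MvPolynomial Finsupp

/-- The ideal `𝔪 = (X 1, …, X N)` generated by the variables `X i` with `i ≠ 0`. -/
noncomputable def mIdeal (F : Type*) [CommSemiring F] (N : ℕ) :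
    Ideal (MvPolynomial (Fin (N + 1)) F) :=
  Ideal.span {p | ∃ i : Fin (N + 1), i ≠ 0 ∧ p = X i}

/-- The `m`-fold iterate of the partial derivative with respect to `X 0`,
as an `F`-linear endomorphism. -/
noncomputable def pd0pow (F : Type*) [CommSemiring F] (N : ℕ) (m : ℕ) :
    MvPolynomial (Fin (N + 1)) F →ₗ[F] MvPolynomial (Fin (N + 1)) F :=
  (pderiv (0 : Fin (N + 1))).toLinearMap ^ m

namespace StmtAux

variable {F : Type*} [Field F] [CharZero F] {N : ℕ}
local notation "R" => MvPolynomial (Fin (N + 1)) F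

lemma pd0pow_zero (f : R) : pd0pow F N 0 f = f := rfl

lemma pd0pow_succ (m : ℕ) (f : R) :
    pd0pow F N (m + 1) f = pd0pow F N m (pderiv 0 f) := by
  simp [pd0pow, pow_succ, Module.End.mul_apply]

lemma pd0pow_succ' (m : ℕ) (f : R) :
    pd0pow F N (m + 1) f = pderiv 0 (pd0pow F N m f) := by
  simp [pd0pow, pow_succ', Module.End.mul_apply]

lemma pd0pow_monomial_eq_zero (m : ℕ) (d : Fin (N + 1) →₀ ℕ) (c : F) (h : d 0 < m) :
    pd0pow F N m (monomial d c) = 0 := by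
  induction m generalizing d c with
  | zero => omega
  | succ m ih =>
    rw [pd0pow_succ, pderiv_monomial]
    by_cases h0 : d 0 = 0
    · simp [h0]
    · apply ih
      have h' := Finsupp.tsub_apply d (Finsupp.single (0 : Fin (N+1)) 1) 0
      simp only [Finsupp.single_eq_same] at h'
      omega

lemma coeff_pderiv0 (f : R) (e : Fin (N + 1) →₀ ℕ) :
    coeff e (pderiv 0 f) = ((e 0 + 1 : ℕ) : F) * coeff (e + Finsupp.single 0 1) f := by
  induction f using MvPolynomial.induction_on' with
  | monomial d c =>
    rw [pderiv_monomial, coeff_monomial, coeff_monomial]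
    by_cases hd : d = e + Finsupp.single 0 1
    · subst hd
      rw [if_pos (add_tsub_cancel_right _ _), if_pos rfl]
      simp [mul_comm]
    · rw [if_neg hd]
      by_cases h0 : d 0 = 0
      · by_cases hde : d - Finsupp.single 0 1 = e
        · rw [if_pos hde]
          have : (d 0 : F) = 0 := by exact_mod_cast congrArg Nat.cast h0
          simp [h0, mul_zero]
        · rw [if_neg hde, mul_zero]
      · have hle : Finsupp.single (0 : Fin (N+1)) 1 ≤ d := by
          rw [Finsupp.single_le_iff]; omega
        by_cases hde : d - Finsupp.single 0 1 = e
        · exfalso; apply hd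
          rw [← hde, tsub_add_cancel_of_le hle]
        · rw [if_neg hde, mul_zero]
  | add p q hp hq => simp [hp, hq, map_add, coeff_add, mul_add]

lemma coeff_pd0pow (m : ℕ) (f : R) (e : Fin (N + 1) →₀ ℕ) :
    coeff e (pd0pow F N m f) =
      (((e 0 + m).descFactorial m : ℕ) : F) * coeff (e + Finsupp.single 0 m) f := by
  induction m generalizing f with
  | zero => simp [pd0pow_zero]
  | succ m ih =>
    rw [pd0pow_succ, ih, coeff_pderiv0]
    have h1 : e + Finsupp.single 0 m + Finsupp.single 0 1 = e + Finsupp.single 0 (m + 1) := by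
      rw [add_assoc, ← Finsupp.single_add]
    have h2 : (e + Finsupp.single (0 : Fin (N+1)) m) 0 = e 0 + m := by simp
    rw [h1, h2, ← mul_assoc]
    congr 1
    rw [← Nat.cast_mul]
    congr 1
    rw [show e 0 + (m + 1) = (e 0 + m) + 1 from by omega, Nat.succ_descFactorial_succ]
    ring

/-- off-degree: total degree in the variables other than `X 0`. -/
def odeg (d : Fin (N + 1) →₀ ℕ) : ℕ := ∑ i ∈ Finset.univ.erase 0, d i

lemma degree_eq_odeg (d : Fin (N + 1) →₀ ℕ) : Finsupp.degree d = d 0 + odeg d := by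
  have h1 : Finsupp.degree d = ∑ i ∈ Finset.univ, d i := by
    refine Finset.sum_subset (Finset.subset_univ _) ?_
    intro i _ hi
    exact Finsupp.notMem_support_iff.mp hi
  rw [h1, odeg, Finset.add_sum_erase _ _ (Finset.mem_univ 0)]

lemma odeg_add (a b : Fin (N + 1) →₀ ℕ) : odeg (a + b) = odeg a + odeg b := by
  simp [odeg, Finset.sum_add_distrib]


lemma mIdeal_eq_span_image :
    mIdeal F N = Ideal.span (X '' {i : Fin (N + 1) | i ≠ 0}) := by
  unfold mIdeal
  congr 1
  ext p
  simp only [Set.mem_setOf_eq, Set.mem_image]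
  constructor
  · rintro ⟨i, hi, rfl⟩; exact ⟨i, hi, rfl⟩
  · rintro ⟨i, hi, rfl⟩; exact ⟨i, hi, rfl⟩

lemma X_mem_mIdeal {i : Fin (N + 1)} (hi : i ≠ 0) : (X i : R) ∈ mIdeal F N :=
  Ideal.subset_span ⟨i, hi, rfl⟩

/-- every monomial lies in `𝔪 ^ (its off-degree)` -/
lemma monomial_mem_pow (j : ℕ) (d : Fin (N + 1) →₀ ℕ) (c : F) (h : j ≤ odeg d) :
    (monomial d c : R) ∈ mIdeal F N ^ j := by
  induction j generalizing d with
  | zero => simp [Ideal.one_eq_top]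
  | succ j ih =>
    have hpos : 0 < odeg d := by omega
    obtain ⟨i, hi, hdi⟩ : ∃ i ∈ Finset.univ.erase (0 : Fin (N + 1)), d i ≠ 0 := by
      by_contra hc
      push_neg at hc
      have : odeg d = 0 := Finset.sum_eq_zero hc
      omega
    have hi0 : i ≠ 0 := (Finset.mem_erase.mp hi).1
    have hle : Finsupp.single i 1 ≤ d := by rw [Finsupp.single_le_iff]; omega
    have hsplit : (monomial d c : R) = monomial (d - Finsupp.single i 1) c * X i := by
      rw [X, monomial_mul, mul_one, tsub_add_cancel_of_le hle]
    have key : ∀ x, (d - Finsupp.single i 1 : Fin (N + 1) →₀ ℕ) x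
        = d x - (if i = x then 1 else 0) := fun x => by
      rw [Finsupp.tsub_apply, Finsupp.single_apply]
    have hod : odeg (d - Finsupp.single i 1) + 1 = odeg d := by
      unfold odeg
      rw [← Finset.add_sum_erase _ _ hi, ← Finset.add_sum_erase _ d hi, key i, if_pos rfl]
      have hs : ∑ x ∈ (Finset.univ.erase (0 : Fin (N + 1))).erase i,
          (d - Finsupp.single i 1 : Fin (N + 1) →₀ ℕ) x
          = ∑ x ∈ (Finset.univ.erase (0 : Fin (N + 1))).erase i, d x :=
        Finset.sum_congr rfl fun x hx => by
          rw [key x, if_neg (fun h => (Finset.mem_erase.mp hx).1 h.symm), Nat.sub_zero]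
      rw [hs]
      omega
    rw [hsplit, pow_succ]
    exact Ideal.mul_mem_mul (ih _ (by omega)) (X_mem_mIdeal hi0)


/-- conversely, membership in `𝔪 ^ j` forces off-degree `≥ j` on the support -/
lemma odeg_ge_of_mem_pow (j : ℕ) (f : R) (hf : f ∈ mIdeal F N ^ j) :
    ∀ d ∈ f.support, j ≤ odeg d := by
  induction j generalizing f with
  | zero => intro d _; omega
  | succ j ih =>
    rw [pow_succ] at hf
    refine Submodule.mul_induction_on hf ?_ ?_
    · intro a ha b hb d hd
      have hd' := MvPolynomial.support_mul a b hd
      rw [Finset.mem_add] at hd'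
      obtain ⟨da, hda, db, hdb, rfl⟩ := hd'
      have h1 : j ≤ odeg da := ih a ha da hda
      have h2 : 1 ≤ odeg db := by
        rw [mIdeal_eq_span_image, mem_ideal_span_X_image] at hb
        obtain ⟨i, hi, hdbi⟩ := hb db hdb
        have : db i ≤ odeg db :=
          Finset.single_le_sum (f := fun x => db x) (fun _ _ => Nat.zero_le _)
            (Finset.mem_erase.mpr ⟨hi, Finset.mem_univ i⟩)
        omega
      have : odeg (da + db) = odeg da + odeg db := by
        simp [odeg, Finset.sum_add_distrib]
      omega
    · intro x y hx hy d hd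
      have := MvPolynomial.support_add hd
      rw [Finset.mem_union] at this
      rcases this with h | h
      · exact hx d h
      · exact hy d h


/-- formal integration w.r.t. `X 0`. -/
noncomputable def Lmap (F : Type*) [Field F] (N : ℕ) :
    MvPolynomial (Fin (N + 1)) F →ₗ[F] MvPolynomial (Fin (N + 1)) F :=
  (basisMonomials (Fin (N + 1)) F).constr F fun d =>
    monomial (d + Finsupp.single 0 1) (((d 0 : F) + 1)⁻¹)

lemma Lmap_monomial (d : Fin (N + 1) →₀ ℕ) (c : F) :
    Lmap F N (monomial d c) = monomial (d + Finsupp.single 0 1) (c * ((d 0 : F) + 1)⁻¹) := by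
  have h1 : (monomial d c : R) = c • monomial d 1 := by
    rw [smul_monomial, smul_eq_mul, mul_one]
  rw [h1, map_smul]
  have h2 : (monomial d 1 : R) = basisMonomials (Fin (N + 1)) F d := by
    rw [coe_basisMonomials]
  rw [h2]
  rw [Lmap, Module.Basis.constr_basis]
  rw [smul_monomial, smul_eq_mul]

lemma pderiv0_Lmap (f : R) : pderiv 0 (Lmap F N f) = f := by
  induction f using MvPolynomial.induction_on' with
  | monomial d c =>
    rw [Lmap_monomial, pderiv_monomial, add_tsub_cancel_right]
    have h0 : (d + Finsupp.single (0 : Fin (N + 1)) 1 : Fin (N + 1) →₀ ℕ) 0 = d 0 + 1 := by simp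
    rw [h0]
    have hne : ((d 0 : F) + 1) ≠ 0 := Nat.cast_add_one_ne_zero (d 0)
    congr 1
    push_cast
    field_simp
  | add p q hp hq => rw [map_add, map_add, hp, hq]

lemma pd0pow_Lmap_pow (m : ℕ) (f : R) :
    pd0pow F N m ((Lmap F N ^ m) f) = f := by
  induction m generalizing f with
  | zero => rfl
  | succ m ih =>
    have h1 : (Lmap F N ^ (m + 1)) f = Lmap F N ((Lmap F N ^ m) f) := by
      rw [pow_succ', Module.End.mul_apply]
    rw [h1]
    have h2 : pd0pow F N (m + 1) (Lmap F N ((Lmap F N ^ m) f))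
        = pd0pow F N m (pderiv 0 (Lmap F N ((Lmap F N ^ m) f))) := pd0pow_succ _ _
    rw [h2, pderiv0_Lmap, ih]

-- homogeneity
lemma degree_of_isHom {f : R} {n : ℕ} (hf : f.IsHomogeneous n)
    {d : Fin (N + 1) →₀ ℕ} (h : coeff d f ≠ 0) : Finsupp.degree d = n := by
  rw [Finsupp.degree_eq_weight_one]
  exact hf h

lemma isHom_of {f : R} {n : ℕ}
    (h : ∀ d, coeff d f ≠ 0 → Finsupp.degree d = n) : f.IsHomogeneous n := by
  intro d hd
  show (weight (fun _ => (1 : ℕ))) d = n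
  rw [← Finsupp.degree_eq_weight_one]
  exact h d hd

lemma fdegree_add (a b : Fin (N + 1) →₀ ℕ) :
    Finsupp.degree (a + b) = Finsupp.degree a + Finsupp.degree b := by
  simp [Finsupp.degree_eq_weight_one, map_add]

lemma fdegree_single_one (i : Fin (N + 1)) :
    Finsupp.degree (Finsupp.single i 1) = 1 := by
  exact Finsupp.degree_single i 1

lemma isHomogeneous_pderiv0 {f : R} {j : ℕ} (hf : f.IsHomogeneous (j + 1)) :
    (pderiv 0 f).IsHomogeneous j := by
  apply isHom_of
  intro d hd
  rw [coeff_pderiv0] at hd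
  have h2 : coeff (d + Finsupp.single 0 1) f ≠ 0 := fun h => hd (by rw [h, mul_zero])
  have h3 := degree_of_isHom hf h2
  rw [fdegree_add, fdegree_single_one] at h3
  omega

lemma isHomogeneous_pd0pow {m j : ℕ} {f : R} (hf : f.IsHomogeneous (j + m)) :
    (pd0pow F N m f).IsHomogeneous j := by
  induction m generalizing f with
  | zero => exact hf
  | succ m ih =>
    rw [pd0pow_succ]
    exact ih (isHomogeneous_pderiv0 (by rwa [show j + (m + 1) = (j + m) + 1 from rfl] at hf))

lemma isHomogeneous_Lmap {j : ℕ} {f : R} (hf : f.IsHomogeneous j) :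
    (Lmap F N f).IsHomogeneous (j + 1) := by
  have : Lmap F N f ∈ homogeneousSubmodule (Fin (N + 1)) F (j + 1) := by
    have hsum : Lmap F N f = ∑ d ∈ f.support, Lmap F N (monomial d (coeff d f)) := by
      rw [← map_sum]
      congr 1
      exact f.as_sum
    rw [hsum]
    apply Submodule.sum_mem
    intro d hd
    rw [Lmap_monomial, mem_homogeneousSubmodule]
    apply isHomogeneous_monomial
    rw [fdegree_add, fdegree_single_one,
      degree_of_isHom hf (MvPolynomial.mem_support_iff.mp hd)]
  rwa [mem_homogeneousSubmodule] at this

lemma isHomogeneous_Lmap_pow {m j : ℕ} {f : R} (hf : f.IsHomogeneous j) :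
    ((Lmap F N ^ m) f).IsHomogeneous (j + m) := by
  induction m with
  | zero => exact hf
  | succ m ih =>
    have h1 : (Lmap F N ^ (m + 1)) f = Lmap F N ((Lmap F N ^ m) f) := by
      rw [pow_succ', Module.End.mul_apply]
    rw [h1, show j + (m + 1) = (j + m) + 1 from rfl]
    exact isHomogeneous_Lmap ih


end StmtAux

open StmtAux in
theorem stmt_10 {F : Type*} [Field F] [CharZero F] {N : ℕ} (hN : 1 ≤ N)
    (k n : ℕ) (hk : 1 ≤ k) (hkn : k < n) :
    ∃ e : (↥(homogeneousSubmodule (Fin (N + 1)) F n) ⧸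
            (Submodule.restrictScalars F ((mIdeal F N) ^ (k + 1))).comap
              (homogeneousSubmodule (Fin (N + 1)) F n).subtype) ≃ₗ[F]
          ↥(homogeneousSubmodule (Fin (N + 1)) F k),
      ∀ f : ↥(homogeneousSubmodule (Fin (N + 1)) F n),
        (e (Submodule.Quotient.mk f) : MvPolynomial (Fin (N + 1)) F) =
          pd0pow F N (n - k) (f : MvPolynomial (Fin (N + 1)) F) := by
  set m := n - k with hm
  have hnm : n = k + m := by omega
  -- the restricted map
  have hmaps : ∀ f : MvPolynomial (Fin (N + 1)) F,
      f ∈ homogeneousSubmodule (Fin (N + 1)) F n →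
      pd0pow F N m f ∈ homogeneousSubmodule (Fin (N + 1)) F k := by
    intro f hf
    rw [mem_homogeneousSubmodule] at hf ⊢
    exact isHomogeneous_pd0pow (by rwa [← hnm])
  set φ : ↥(homogeneousSubmodule (Fin (N + 1)) F n) →ₗ[F]
      ↥(homogeneousSubmodule (Fin (N + 1)) F k) :=
    LinearMap.codRestrict (homogeneousSubmodule (Fin (N + 1)) F k)
      ((pd0pow F N m) ∘ₗ (homogeneousSubmodule (Fin (N + 1)) F n).subtype)
      (fun f => hmaps f f.2) with hφ
  have hφval : ∀ f, (φ f : MvPolynomial (Fin (N + 1)) F) = pd0pow F N m (f : MvPolynomial (Fin (N + 1)) F) :=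
    fun f => rfl
  -- kernel computation
  have hker : LinearMap.ker φ =
      (Submodule.restrictScalars F ((mIdeal F N) ^ (k + 1))).comap
        (homogeneousSubmodule (Fin (N + 1)) F n).subtype := by
    ext f
    rw [LinearMap.mem_ker, Submodule.mem_comap, Submodule.restrictScalars_mem,
      Submodule.subtype_apply]
    have hzero : φ f = 0 ↔ pd0pow F N m (f : MvPolynomial (Fin (N + 1)) F) = 0 := by
      constructor
      · intro h
        have := congrArg (Subtype.val) h
        rwa [hφval] at this
      · intro h
        apply Subtype.ext
        rw [hφval]
        exact h
    rw [hzero]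
    have hfhom : (f : MvPolynomial (Fin (N + 1)) F).IsHomogeneous n := f.2
    constructor
    · -- kernel → ideal power
      intro h
      have hsupp : ∀ d ∈ (f : MvPolynomial (Fin (N + 1)) F).support, d 0 < m := by
        intro d hd
        by_contra hge
        push_neg at hge
        have hle : Finsupp.single (0 : Fin (N + 1)) m ≤ d := by
          rw [Finsupp.single_le_iff]; omega
        have hc := coeff_pd0pow m (f : MvPolynomial (Fin (N + 1)) F) (d - Finsupp.single 0 m)
        rw [h, coeff_zero, tsub_add_cancel_of_le hle] at hc
        have hd0 : coeff d (f : MvPolynomial (Fin (N + 1)) F) ≠ 0 :=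
          MvPolynomial.mem_support_iff.mp hd
        have hdesc : (((d - Finsupp.single (0 : Fin (N + 1)) m : Fin (N + 1) →₀ ℕ) 0 + m).descFactorial m) ≠ 0 := by
          intro hz
          rw [Nat.descFactorial_eq_zero_iff_lt] at hz
          omega
        have : (((((d - Finsupp.single (0 : Fin (N + 1)) m : Fin (N + 1) →₀ ℕ) 0 + m).descFactorial m) : ℕ) : F) ≠ 0 :=
          Nat.cast_ne_zero.mpr hdesc
        exact this (by
          rcases mul_eq_zero.mp hc.symm with h1 | h1
          · exact h1
          · exact absurd h1 hd0)
      -- each monomial of f lies in 𝔪^(k+1)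
      rw [(f : MvPolynomial (Fin (N + 1)) F).as_sum]
      apply Submodule.sum_mem
      intro d hd
      apply monomial_mem_pow
      have hdeg := degree_of_isHom hfhom (MvPolynomial.mem_support_iff.mp hd)
      rw [degree_eq_odeg] at hdeg
      have := hsupp d hd
      omega
    · -- ideal power → kernel
      intro h
      have hsupp := odeg_ge_of_mem_pow (k + 1) _ h
      rw [(f : MvPolynomial (Fin (N + 1)) F).as_sum, map_sum]
      apply Finset.sum_eq_zero
      intro d hd
      apply pd0pow_monomial_eq_zero
      have hdeg := degree_of_isHom hfhom (MvPolynomial.mem_support_iff.mp hd)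
      rw [degree_eq_odeg] at hdeg
      have := hsupp d hd
      omega
  -- surjectivity
  have hsurj : Function.Surjective φ := by
    intro g
    have hg : (g : MvPolynomial (Fin (N + 1)) F).IsHomogeneous k := g.2
    have h1 : ((Lmap F N ^ m) (g : MvPolynomial (Fin (N + 1)) F)).IsHomogeneous n := by
      rw [hnm]; exact isHomogeneous_Lmap_pow hg
    refine ⟨⟨(Lmap F N ^ m) (g : MvPolynomial (Fin (N + 1)) F), h1⟩, ?_⟩
    apply Subtype.ext
    rw [hφval]
    exact pd0pow_Lmap_pow m _
  refine ⟨(Submodule.quotEquivOfEq _ _ hker.symm).trans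
    (φ.quotKerEquivOfSurjective hsurj), ?_⟩
  intro f
  rw [LinearEquiv.trans_apply, Submodule.quotEquivOfEq_mk]
  have : (φ.quotKerEquivOfSurjective hsurj) (Submodule.Quotient.mk f) = φ f := by
    rw [LinearMap.quotKerEquivOfSurjective]
    simp [LinearMap.quotKerEquivRange_apply_mk]
  rw [this, hφval]
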